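/- arXiv:1011.5729 — 5 statements merged into one kernel-verified Lean document; each statement's English description precedes it below -/
import Mathlib

section
/- There exists a constant C > 0 such that for every integer m \geq 1 and every y \in [0,1], \big| B_m f(y) - f(y) - y(1-y) f''(y)/(2m) \big| \leq C/m^2. -/
open Finset

section BernsteinAux
open Set

lemma bern_nat_id (m j i : ℕ) (h : j + i ≤ m) :
    m.choose (j + i) * (j + i).descFactorial j = m.descFactorial j * (m - j).choose i := by
  rw [Nat.descFactorial_eq_factorial_mul_choose, Nat.descFactorial_eq_factorial_mul_choose]
  have h2 := Nat.choose_mul (n := m) (k := j + i) (s := j) (Nat.le_add_right _ _)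
  rw [Nat.add_sub_cancel_left] at h2
  calc m.choose (j + i) * (Nat.factorial j * (j + i).choose j)
      = Nat.factorial j * (m.choose (j + i) * (j + i).choose j) := by ring
    _ = Nat.factorial j * (m.choose j * (m - j).choose i) := by rw [h2]
    _ = Nat.factorial j * m.choose j * (m - j).choose i := by ring

lemma bern_w_sum (m : ℕ) (y : ℝ) :
    ∑ k ∈ range (m + 1), (m.choose k : ℝ) * y ^ k * (1 - y) ^ (m - k) = 1 := by
  have h := add_pow y (1 - y) m
  calc ∑ k ∈ range (m + 1), (m.choose k : ℝ) * y ^ k * (1 - y) ^ (m - k)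
      = ∑ k ∈ range (m + 1), y ^ k * (1 - y) ^ (m - k) * (m.choose k : ℝ) :=
        Finset.sum_congr rfl fun k _ => by ring
    _ = (y + (1 - y)) ^ m := h.symm
    _ = 1 := by norm_num

lemma bern_w_desc (m j : ℕ) (y : ℝ) :
    ∑ k ∈ range (m + 1), (m.choose k : ℝ) * y ^ k * (1 - y) ^ (m - k) * (k.descFactorial j : ℝ)
      = (m.descFactorial j : ℝ) * y ^ j := by
  rcases lt_or_ge m j with hj | hj
  · rw [Nat.descFactorial_eq_zero_iff_lt.2 hj]
    rw [Finset.sum_eq_zero]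
    · simp
    intro k hk
    rw [Finset.mem_range] at hk
    rw [Nat.descFactorial_eq_zero_iff_lt.2 (by omega)]
    simp
  · have hsub : Finset.Ico j (m + 1) ⊆ range (m + 1) := by
      intro k hk; rw [Finset.mem_range]; exact (Finset.mem_Ico.1 hk).2
    rw [← Finset.sum_subset hsub (fun k hkr hk => by
      rw [Finset.mem_range] at hkr
      rw [Finset.mem_Ico] at hk
      rw [Nat.descFactorial_eq_zero_iff_lt.2 (by omega)]
      simp)]
    rw [Finset.sum_Ico_eq_sum_range]
    have hstep : ∀ i ∈ range (m + 1 - j),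
        (m.choose (j + i) : ℝ) * y ^ (j + i) * (1 - y) ^ (m - (j + i)) * ((j + i).descFactorial j : ℝ)
        = (m.descFactorial j : ℝ) * y ^ j *
            (((m - j).choose i : ℝ) * y ^ i * (1 - y) ^ ((m - j) - i)) := by
      intro i hi
      rw [Finset.mem_range] at hi
      have hji : j + i ≤ m := by omega
      have := bern_nat_id m j i hji
      have hc : (m.choose (j + i) : ℝ) * ((j + i).descFactorial j : ℝ)
          = (m.descFactorial j : ℝ) * ((m - j).choose i : ℝ) := by exact_mod_cast congrArg (Nat.cast (R := ℝ)) this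
      have he : m - (j + i) = (m - j) - i := by omega
      rw [he, pow_add]
      calc (m.choose (j + i) : ℝ) * (y ^ j * y ^ i) * (1 - y) ^ (m - j - i) * ((j + i).descFactorial j : ℝ)
          = ((m.choose (j + i) : ℝ) * ((j + i).descFactorial j : ℝ)) * (y ^ j * y ^ i) * (1 - y) ^ (m - j - i) := by ring
        _ = ((m.descFactorial j : ℝ) * ((m - j).choose i : ℝ)) * (y ^ j * y ^ i) * (1 - y) ^ (m - j - i) := by rw [hc]
        _ = (m.descFactorial j : ℝ) * y ^ j * (((m - j).choose i : ℝ) * y ^ i * (1 - y) ^ (m - j - i)) := by ring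
    rw [Finset.sum_congr rfl hstep, ← Finset.mul_sum]
    have : m + 1 - j = (m - j) + 1 := by omega
    rw [this, bern_w_sum (m - j) y, mul_one]

lemma df1 (k : ℕ) : ((k.descFactorial 1 : ℕ) : ℝ) = k := by simp
lemma df2 (k : ℕ) : ((k.descFactorial 2 : ℕ) : ℝ) = k * (k - 1) := by
  rcases k with _ | n
  · simp
  · simp [Nat.descFactorial]; push_cast; ring
lemma df3 (k : ℕ) : ((k.descFactorial 3 : ℕ) : ℝ) = k * (k - 1) * (k - 2) := by
  rcases k with _ | _ | n
  · simp
  · simp [Nat.descFactorial]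
  · simp [Nat.descFactorial]; push_cast; ring
lemma df4 (k : ℕ) : ((k.descFactorial 4 : ℕ) : ℝ) = k * (k - 1) * (k - 2) * (k - 3) := by
  rcases k with _ | _ | _ | n
  · simp
  · simp [Nat.descFactorial]
  · simp [Nat.descFactorial]
  · simp [Nat.descFactorial]; push_cast; ring

lemma bern_sum_poly (m : ℕ) (y c0 c1 c2 c3 c4 : ℝ) :
    ∑ k ∈ range (m + 1), (m.choose k : ℝ) * y ^ k * (1 - y) ^ (m - k) *
      (c0 + c1 * (k.descFactorial 1 : ℝ) + c2 * (k.descFactorial 2 : ℝ)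
        + c3 * (k.descFactorial 3 : ℝ) + c4 * (k.descFactorial 4 : ℝ))
    = c0 + c1 * ((m.descFactorial 1 : ℝ) * y ^ 1) + c2 * ((m.descFactorial 2 : ℝ) * y ^ 2)
        + c3 * ((m.descFactorial 3 : ℝ) * y ^ 3) + c4 * ((m.descFactorial 4 : ℝ) * y ^ 4) := by
  have expand : ∀ k ∈ range (m + 1),
      (m.choose k : ℝ) * y ^ k * (1 - y) ^ (m - k) *
        (c0 + c1 * (k.descFactorial 1 : ℝ) + c2 * (k.descFactorial 2 : ℝ)
          + c3 * (k.descFactorial 3 : ℝ) + c4 * (k.descFactorial 4 : ℝ))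
      = c0 * ((m.choose k : ℝ) * y ^ k * (1 - y) ^ (m - k))
        + c1 * ((m.choose k : ℝ) * y ^ k * (1 - y) ^ (m - k) * (k.descFactorial 1 : ℝ))
        + c2 * ((m.choose k : ℝ) * y ^ k * (1 - y) ^ (m - k) * (k.descFactorial 2 : ℝ))
        + c3 * ((m.choose k : ℝ) * y ^ k * (1 - y) ^ (m - k) * (k.descFactorial 3 : ℝ))
        + c4 * ((m.choose k : ℝ) * y ^ k * (1 - y) ^ (m - k) * (k.descFactorial 4 : ℝ)) :=
    fun k _ => by ring
  rw [Finset.sum_congr rfl expand]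
  rw [Finset.sum_add_distrib, Finset.sum_add_distrib, Finset.sum_add_distrib,
    Finset.sum_add_distrib, ← Finset.mul_sum, ← Finset.mul_sum, ← Finset.mul_sum,
    ← Finset.mul_sum, ← Finset.mul_sum]
  rw [bern_w_sum, bern_w_desc, bern_w_desc, bern_w_desc, bern_w_desc, mul_one]

lemma bern_sum_cubic (m : ℕ) (hm : 1 ≤ m) (y a0 a1 a2 a3 : ℝ) :
    ∑ k ∈ range (m + 1), (m.choose k : ℝ) * y ^ k * (1 - y) ^ (m - k) *
      (a0 + a1 * ((k : ℝ) / m - y) + a2 * ((k : ℝ) / m - y) ^ 2 + a3 * ((k : ℝ) / m - y) ^ 3)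
    = a0 + a2 * (y * (1 - y)) / m + a3 * (y * (1 - y) * (1 - 2 * y)) / m ^ 2 := by
  have hn : (m : ℝ) ≠ 0 := Nat.cast_ne_zero.2 (by omega)
  set n : ℝ := (m : ℝ) with hndef
  have key := bern_sum_poly m y
    (a0 - a1 * y + a2 * y ^ 2 - a3 * y ^ 3)
    (a1 / n + a2 * (1 - 2 * n * y) / n ^ 2 + a3 * (1 - 3 * n * y + 3 * n ^ 2 * y ^ 2) / n ^ 3)
    (a2 / n ^ 2 + a3 * (3 - 3 * n * y) / n ^ 3)
    (a3 / n ^ 3) 0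
  rw [Finset.sum_congr rfl (fun k _ => ?step)] at key
  · rw [key, df1 m, df2 m, df3 m, df4 m]
    field_simp
    ring
  case step =>
    rw [df1 k, df2 k, df3 k, df4 k]
    have : (m.choose k : ℝ) * y ^ k * (1 - y) ^ (m - k) *
        ((a0 - a1 * y + a2 * y ^ 2 - a3 * y ^ 3)
          + (a1 / n + a2 * (1 - 2 * n * y) / n ^ 2 + a3 * (1 - 3 * n * y + 3 * n ^ 2 * y ^ 2) / n ^ 3) * (k : ℝ)
          + (a2 / n ^ 2 + a3 * (3 - 3 * n * y) / n ^ 3) * ((k : ℝ) * ((k : ℝ) - 1))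
          + (a3 / n ^ 3) * ((k : ℝ) * ((k : ℝ) - 1) * ((k : ℝ) - 2))
          + 0 * ((k : ℝ) * ((k : ℝ) - 1) * ((k : ℝ) - 2) * ((k : ℝ) - 3)))
      = (m.choose k : ℝ) * y ^ k * (1 - y) ^ (m - k) *
        (a0 + a1 * ((k : ℝ) / n - y) + a2 * ((k : ℝ) / n - y) ^ 2 + a3 * ((k : ℝ) / n - y) ^ 3) := by
      have h2 : (a0 - a1 * y + a2 * y ^ 2 - a3 * y ^ 3)
          + (a1 / n + a2 * (1 - 2 * n * y) / n ^ 2 + a3 * (1 - 3 * n * y + 3 * n ^ 2 * y ^ 2) / n ^ 3) * (k : ℝ)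
          + (a2 / n ^ 2 + a3 * (3 - 3 * n * y) / n ^ 3) * ((k : ℝ) * ((k : ℝ) - 1))
          + (a3 / n ^ 3) * ((k : ℝ) * ((k : ℝ) - 1) * ((k : ℝ) - 2))
          + 0 * ((k : ℝ) * ((k : ℝ) - 1) * ((k : ℝ) - 2) * ((k : ℝ) - 3))
        = a0 + a1 * ((k : ℝ) / n - y) + a2 * ((k : ℝ) / n - y) ^ 2 + a3 * ((k : ℝ) / n - y) ^ 3 := by
        field_simp
        ring
      rw [h2]
    exact this

lemma bern_sum_quartic (m : ℕ) (hm : 1 ≤ m) (y : ℝ) :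
    ∑ k ∈ range (m + 1), (m.choose k : ℝ) * y ^ k * (1 - y) ^ (m - k) *
      ((k : ℝ) / m - y) ^ 4
    = y * (1 - y) * (3 * ((m : ℝ) - 2) * (y * (1 - y)) + 1) / m ^ 3 := by
  have hn : (m : ℝ) ≠ 0 := Nat.cast_ne_zero.2 (by omega)
  set n : ℝ := (m : ℝ) with hndef
  have key := bern_sum_poly m y
    (y ^ 4)
    ((1 - 4 * n * y + 6 * n ^ 2 * y ^ 2 - 4 * n ^ 3 * y ^ 3) / n ^ 4)
    ((7 - 12 * n * y + 6 * n ^ 2 * y ^ 2) / n ^ 4)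
    ((6 - 4 * n * y) / n ^ 4)
    (1 / n ^ 4)
  rw [Finset.sum_congr rfl (fun k _ => ?step)] at key
  · rw [key, df1 m, df2 m, df3 m, df4 m]
    field_simp
    ring
  case step =>
    rw [df1 k, df2 k, df3 k, df4 k]
    congr 1
    field_simp
    ring

lemma bern_quartic_le (m : ℕ) (hm : 1 ≤ m) (y : ℝ) (hy : y ∈ Set.Icc (0:ℝ) 1) :
    ∑ k ∈ range (m + 1), (m.choose k : ℝ) * y ^ k * (1 - y) ^ (m - k) *
      ((k : ℝ) / m - y) ^ 4 ≤ 1 / (m : ℝ) ^ 2 := by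
  rw [bern_sum_quartic m hm y]
  obtain ⟨hy0, hy1⟩ := hy
  have hn1 : (1 : ℝ) ≤ (m : ℝ) := by exact_mod_cast hm
  have hp0 : 0 ≤ y * (1 - y) := mul_nonneg hy0 (by linarith)
  have hp4 : y * (1 - y) ≤ 1 / 4 := by nlinarith [sq_nonneg (y - 1/2)]
  rw [div_le_div_iff₀ (by positivity) (by positivity)]
  set p : ℝ := y * (1 - y) with hpdef
  set n : ℝ := (m : ℝ) with hndef
  have h16 : p * p ≤ 1 / 16 := by nlinarith
  have hn0 : (0:ℝ) ≤ n := by linarith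
  have h1 : n ^ 3 * (p * p) ≤ n ^ 3 * (1 / 16) :=
    mul_le_mul_of_nonneg_left h16 (by positivity)
  have h2 : n ^ 2 * p ≤ n ^ 2 * (1 / 4) :=
    mul_le_mul_of_nonneg_left (by linarith) (by positivity)
  have h3 : 0 ≤ n ^ 2 * (p * p) := by positivity
  have h4 : n ^ 2 ≤ n ^ 3 := by nlinarith
  nlinarith [h1, h2, h3, h4]

lemma hasFTaylorSeriesUpToOn_global {f : ℝ → ℝ} {U : Set ℝ} {n : ℕ∞} (hU : IsOpen U)
    (hf : ContDiffOn ℝ n f U) :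
    HasFTaylorSeriesUpToOn n f (ftaylorSeries ℝ f) U := by
  have h1 := hf.ftaylorSeriesWithin hU.uniqueDiffOn
  have e : ∀ i : ℕ, ∀ x ∈ U, ftaylorSeriesWithin ℝ f U x i = ftaylorSeries ℝ f x i :=
    fun i x hx => iteratedFDerivWithin_of_isOpen i hU hx
  constructor
  · intro x hx
    rw [← e 0 x hx]
    exact h1.zero_eq x hx
  · intro i hi x hx
    have := (h1.fderivWithin i hi x hx).congr (fun y hy => (e i y hy).symm) (e i x hx).symm
    rwa [e (i + 1) x hx] at this
  · intro i hi
    exact (h1.cont i hi).congr (fun x hx => (e i x hx).symm)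

lemma iteratedDerivWithin_eq_global {f : ℝ → ℝ} {U s : Set ℝ} {n : ℕ} (hU : IsOpen U)
    (hf : ContDiffOn ℝ (n : ℕ∞) f U) (hs : UniqueDiffOn ℝ s) (hsU : s ⊆ U) {x : ℝ}
    (hx : x ∈ s) {m : ℕ} (hm : m ≤ n) :
    iteratedDerivWithin m f s x = iteratedDeriv m f x := by
  have H := (hasFTaylorSeriesUpToOn_global hU hf).mono hsU
  have := H.eq_iteratedFDerivWithin_of_uniqueDiffOn (m := m) (by exact_mod_cast hm) hs hx
  rw [iteratedDerivWithin_eq_iteratedFDerivWithin, iteratedDeriv_eq_iteratedFDeriv, ← this]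
  rfl

lemma taylor_le_aux {f : ℝ → ℝ} {U : Set ℝ} (hU : IsOpen U) (hf : ContDiffOn ℝ 4 f U)
    {M a b : ℝ} (hab : a < b) (hsub : Icc a b ⊆ U)
    (hM : ∀ t ∈ Icc a b, |iteratedDeriv 4 f t| ≤ M) :
    |f b - (f a + iteratedDeriv 1 f a * (b - a) + iteratedDeriv 2 f a * (b - a) ^ 2 / 2
      + iteratedDeriv 3 f a * (b - a) ^ 3 / 6)| ≤ M * (b - a) ^ 4 / 6 := by
  have hud : UniqueDiffOn ℝ (Icc a b) := uniqueDiffOn_Icc hab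
  have hfI : ContDiffOn ℝ ((3 : ℕ) + 1) f (Icc a b) := by
    exact_mod_cast hf.mono hsub
  have hconv : ∀ m : ℕ, m ≤ 4 → ∀ t ∈ Icc a b,
      iteratedDerivWithin m f (Icc a b) t = iteratedDeriv m f t := fun m hm t ht =>
    iteratedDerivWithin_eq_global (n := 4) hU (by exact_mod_cast hf) hud hsub ht hm
  have hbd := taylor_mean_remainder_bound (n := 3) hab.le hfI
    (right_mem_Icc.2 hab.le) (fun t ht => by
      rw [Real.norm_eq_abs, hconv 4 (by norm_num) t ht]
      exact hM t ht)
  rw [taylor_within_apply] at hbd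
  rw [Finset.sum_range_succ, Finset.sum_range_succ, Finset.sum_range_succ,
    Finset.sum_range_succ, Finset.sum_range_zero] at hbd
  rw [hconv 0 (by norm_num) a (left_mem_Icc.2 hab.le),
    hconv 1 (by norm_num) a (left_mem_Icc.2 hab.le),
    hconv 2 (by norm_num) a (left_mem_Icc.2 hab.le),
    hconv 3 (by norm_num) a (left_mem_Icc.2 hab.le)] at hbd
  rw [Real.norm_eq_abs] at hbd
  simp only [iteratedDeriv_zero, smul_eq_mul, Nat.factorial] at hbd
  refine le_trans (le_of_eq ?_) (hbd.trans (le_of_eq ?_))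
  · congr 1
    push_cast
    ring
  · push_cast
    norm_num

lemma bern_taylor_bd {f : ℝ → ℝ} {U : Set ℝ} (hU : IsOpen U) (hUI : Icc (0:ℝ) 1 ⊆ U)
    (hf : ContDiffOn ℝ 4 f U) {M : ℝ} (hM : ∀ t ∈ Icc (0:ℝ) 1, |iteratedDeriv 4 f t| ≤ M)
    {x y : ℝ} (hx : x ∈ Icc (0:ℝ) 1) (hy : y ∈ Icc (0:ℝ) 1) :
    |f x - (f y + iteratedDeriv 1 f y * (x - y) + iteratedDeriv 2 f y * (x - y) ^ 2 / 2
      + iteratedDeriv 3 f y * (x - y) ^ 3 / 6)| ≤ M * (x - y) ^ 4 / 6 := by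
  rcases lt_trichotomy y x with h | h | h
  · exact taylor_le_aux hU hf h ((Icc_subset_Icc hy.1 hx.2).trans hUI) fun t ht =>
      hM t ((Icc_subset_Icc hy.1 hx.2) ht)
  · subst h
    norm_num
  · -- x < y : reflection
    set g : ℝ → ℝ := fun t => f (-t) with hg
    set V : Set ℝ := (fun t : ℝ => -t) ⁻¹' U with hV
    have hVopen : IsOpen V := hU.preimage continuous_neg
    have hgV : ContDiffOn ℝ 4 g V := hf.comp contDiff_neg.contDiffOn (fun t ht => ht)
    have hsub : Icc (-y) (-x) ⊆ V := by
      intro t ht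
      obtain ⟨h1, h2⟩ := Set.mem_Icc.1 ht
      exact Set.mem_preimage.2 (hUI (Set.mem_Icc.2 ⟨by linarith [hx.1], by linarith [hy.2]⟩))
    have hMg : ∀ t ∈ Icc (-y) (-x), |iteratedDeriv 4 g t| ≤ M := by
      intro t ht
      obtain ⟨h1, h2⟩ := Set.mem_Icc.1 ht
      have htx : -t ∈ Icc (0:ℝ) 1 := Set.mem_Icc.2 ⟨by linarith [hx.1], by linarith [hy.2]⟩
      rw [hg, iteratedDeriv_comp_neg]
      calc |((-1:ℝ)) ^ 4 • iteratedDeriv 4 f (-t)| = |iteratedDeriv 4 f (-t)| := by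
            rw [smul_eq_mul]; norm_num
        _ ≤ M := hM (-t) htx
    have key := taylor_le_aux hVopen hgV (by linarith : -y < -x) hsub hMg
    have e0 : g (-x) = f x := by simp [hg]
    have e1 : ∀ k : ℕ, iteratedDeriv k g (-y) = (-1 : ℝ) ^ k • iteratedDeriv k f y := by
      intro k
      rw [hg, iteratedDeriv_comp_neg, neg_neg]
    rw [e0, e1 1, e1 2, e1 3] at key
    simp only [smul_eq_mul] at key
    have e2 : f x - (g (-y) + (-1:ℝ) ^ 1 * iteratedDeriv 1 f y * (-x - -y)
          + (-1:ℝ) ^ 2 * iteratedDeriv 2 f y * (-x - -y) ^ 2 / 2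
          + (-1:ℝ) ^ 3 * iteratedDeriv 3 f y * (-x - -y) ^ 3 / 6)
        = f x - (f y + iteratedDeriv 1 f y * (x - y) + iteratedDeriv 2 f y * (x - y) ^ 2 / 2
          + iteratedDeriv 3 f y * (x - y) ^ 3 / 6) := by
      have : g (-y) = f y := by simp [hg]
      rw [this]; ring
    rw [e2] at key
    have e3 : M * (-x - -y) ^ 4 / 6 = M * (x - y) ^ 4 / 6 := by ring
    rwa [e3] at key
end BernsteinAux

/-- The `m`-th Bernstein polynomial of `f`, evaluated at `y`:
`B_m f (y) = ∑_{k=0}^m (m choose k) y^k (1-y)^{m-k} f(k/m)`. -/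
noncomputable def bernsteinApprox (f : ℝ → ℝ) (m : ℕ) (y : ℝ) : ℝ :=
  ∑ k ∈ Finset.range (m + 1), (m.choose k : ℝ) * y ^ k * (1 - y) ^ (m - k) * f (k / m)

section Main
open Set

lemma bern_main_est {f : ℝ → ℝ} {U : Set ℝ} (hU : IsOpen U) (hUI : Icc (0:ℝ) 1 ⊆ U)
    (hf : ContDiffOn ℝ 4 f U) {M3 M4 : ℝ}
    (hM3 : ∀ t ∈ Icc (0:ℝ) 1, |iteratedDeriv 3 f t| ≤ M3)
    (hM4 : ∀ t ∈ Icc (0:ℝ) 1, |iteratedDeriv 4 f t| ≤ M4)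
    (hM40 : 0 ≤ M4) (m : ℕ) (hm : 1 ≤ m) (y : ℝ) (hy : y ∈ Icc (0:ℝ) 1) :
    |bernsteinApprox f m y - f y - y * (1 - y) * deriv (deriv f) y / (2 * m)|
      ≤ (M4 / 6 + M3 / 6) / (m : ℝ) ^ 2 := by
  have hn1 : (1:ℝ) ≤ (m:ℝ) := by exact_mod_cast hm
  have hn0 : (m:ℝ) ≠ 0 := by positivity
  have hd2 : deriv (deriv f) y = iteratedDeriv 2 f y := by
    rw [iteratedDeriv_succ, iteratedDeriv_one]
  have hcubic := bern_sum_cubic m hm y (f y) (iteratedDeriv 1 f y)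
    (iteratedDeriv 2 f y / 2) (iteratedDeriv 3 f y / 6)
  have hsplit : ∑ k ∈ range (m + 1), (m.choose k : ℝ) * y ^ k * (1 - y) ^ (m - k) *
        (f ((k : ℝ) / m) - (f y + iteratedDeriv 1 f y * ((k : ℝ) / m - y)
          + iteratedDeriv 2 f y / 2 * ((k : ℝ) / m - y) ^ 2
          + iteratedDeriv 3 f y / 6 * ((k : ℝ) / m - y) ^ 3))
      = bernsteinApprox f m y
        - ∑ k ∈ range (m + 1), (m.choose k : ℝ) * y ^ k * (1 - y) ^ (m - k) *
          (f y + iteratedDeriv 1 f y * ((k : ℝ) / m - y)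
            + iteratedDeriv 2 f y / 2 * ((k : ℝ) / m - y) ^ 2
            + iteratedDeriv 3 f y / 6 * ((k : ℝ) / m - y) ^ 3) := by
    rw [bernsteinApprox, ← Finset.sum_sub_distrib]
    exact Finset.sum_congr rfl fun k _ => by push_cast; ring
  have hT : bernsteinApprox f m y - f y - y * (1 - y) * deriv (deriv f) y / (2 * m)
      = (∑ k ∈ range (m + 1), (m.choose k : ℝ) * y ^ k * (1 - y) ^ (m - k) *
          (f ((k : ℝ) / m) - (f y + iteratedDeriv 1 f y * ((k : ℝ) / m - y)
            + iteratedDeriv 2 f y / 2 * ((k : ℝ) / m - y) ^ 2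
            + iteratedDeriv 3 f y / 6 * ((k : ℝ) / m - y) ^ 3)))
        + iteratedDeriv 3 f y / 6 * (y * (1 - y) * (1 - 2 * y)) / (m : ℝ) ^ 2 := by
    rw [hsplit, hcubic, hd2]
    field_simp
    ring
  rw [hT]
  have habs1 : |∑ k ∈ range (m + 1), (m.choose k : ℝ) * y ^ k * (1 - y) ^ (m - k) *
        (f ((k : ℝ) / m) - (f y + iteratedDeriv 1 f y * ((k : ℝ) / m - y)
          + iteratedDeriv 2 f y / 2 * ((k : ℝ) / m - y) ^ 2
          + iteratedDeriv 3 f y / 6 * ((k : ℝ) / m - y) ^ 3))|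
      ≤ M4 / 6 * (1 / (m : ℝ) ^ 2) := by
    calc _ ≤ ∑ k ∈ range (m + 1), |(m.choose k : ℝ) * y ^ k * (1 - y) ^ (m - k) *
          (f ((k : ℝ) / m) - (f y + iteratedDeriv 1 f y * ((k : ℝ) / m - y)
            + iteratedDeriv 2 f y / 2 * ((k : ℝ) / m - y) ^ 2
            + iteratedDeriv 3 f y / 6 * ((k : ℝ) / m - y) ^ 3))| :=
        Finset.abs_sum_le_sum_abs _ _
      _ ≤ ∑ k ∈ range (m + 1), (m.choose k : ℝ) * y ^ k * (1 - y) ^ (m - k) *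
            (M4 / 6 * ((k : ℝ) / m - y) ^ 4) := by
        refine Finset.sum_le_sum fun k hk => ?_
        have hw0 : 0 ≤ (m.choose k : ℝ) * y ^ k * (1 - y) ^ (m - k) :=
          mul_nonneg (mul_nonneg (by positivity) (pow_nonneg hy.1 _))
            (pow_nonneg (by linarith [hy.2]) _)
        rw [abs_mul, abs_of_nonneg hw0]
        refine mul_le_mul_of_nonneg_left ?_ hw0
        have hkm : (k : ℝ) / m ∈ Icc (0:ℝ) 1 := by
          rw [Finset.mem_range] at hk
          constructor
          · positivity
          · rw [div_le_one (by positivity)]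
            exact_mod_cast Nat.lt_succ_iff.1 hk
        have hb := bern_taylor_bd hU hUI hf hM4 hkm hy
        have e : f ((k : ℝ) / m) - (f y + iteratedDeriv 1 f y * ((k : ℝ) / m - y)
              + iteratedDeriv 2 f y / 2 * ((k : ℝ) / m - y) ^ 2
              + iteratedDeriv 3 f y / 6 * ((k : ℝ) / m - y) ^ 3)
            = f ((k : ℝ) / m) - (f y + iteratedDeriv 1 f y * ((k : ℝ) / m - y)
              + iteratedDeriv 2 f y * ((k : ℝ) / m - y) ^ 2 / 2
              + iteratedDeriv 3 f y * ((k : ℝ) / m - y) ^ 3 / 6) := by ring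
        rw [e]
        exact hb.trans (le_of_eq (by ring))
      _ = M4 / 6 * ∑ k ∈ range (m + 1), (m.choose k : ℝ) * y ^ k * (1 - y) ^ (m - k) *
            ((k : ℝ) / m - y) ^ 4 := by
        rw [Finset.mul_sum]
        exact Finset.sum_congr rfl fun k _ => by ring
      _ ≤ M4 / 6 * (1 / (m : ℝ) ^ 2) :=
        mul_le_mul_of_nonneg_left (bern_quartic_le m hm y hy) (by linarith)
  have habs2 : |iteratedDeriv 3 f y / 6 * (y * (1 - y) * (1 - 2 * y)) / (m : ℝ) ^ 2|
      ≤ M3 / 6 * (1 / (m : ℝ) ^ 2) := by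
    have h3 : |iteratedDeriv 3 f y| ≤ M3 := hM3 y hy
    have hq : |y * (1 - y) * (1 - 2 * y)| ≤ 1 := by
      rw [abs_le]
      constructor <;> nlinarith [hy.1, hy.2, sq_nonneg (y - 1/2), sq_nonneg y, sq_nonneg (1 - y)]
    have e : iteratedDeriv 3 f y / 6 * (y * (1 - y) * (1 - 2 * y)) / (m : ℝ) ^ 2
        = iteratedDeriv 3 f y * (y * (1 - y) * (1 - 2 * y)) / (6 * (m : ℝ) ^ 2) := by ring
    rw [e, abs_div, abs_mul]
    rw [abs_of_pos (by positivity : (0:ℝ) < 6 * (m : ℝ) ^ 2)]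
    rw [div_le_iff₀ (by positivity)]
    have : M3 / 6 * (1 / (m : ℝ) ^ 2) * (6 * (m : ℝ) ^ 2) = M3 := by field_simp
    rw [this]
    calc |iteratedDeriv 3 f y| * |y * (1 - y) * (1 - 2 * y)| ≤ M3 * 1 := by
          refine mul_le_mul h3 hq (abs_nonneg _) ((abs_nonneg _).trans h3)
      _ = M3 := mul_one M3
  calc _ ≤ |∑ k ∈ range (m + 1), (m.choose k : ℝ) * y ^ k * (1 - y) ^ (m - k) *
          (f ((k : ℝ) / m) - (f y + iteratedDeriv 1 f y * ((k : ℝ) / m - y)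
            + iteratedDeriv 2 f y / 2 * ((k : ℝ) / m - y) ^ 2
            + iteratedDeriv 3 f y / 6 * ((k : ℝ) / m - y) ^ 3))|
        + |iteratedDeriv 3 f y / 6 * (y * (1 - y) * (1 - 2 * y)) / (m : ℝ) ^ 2| :=
      abs_add_le _ _
    _ ≤ M4 / 6 * (1 / (m : ℝ) ^ 2) + M3 / 6 * (1 / (m : ℝ) ^ 2) := add_le_add habs1 habs2
    _ = (M4 / 6 + M3 / 6) / (m : ℝ) ^ 2 := by ring

/-- If `f : ℝ → ℝ` is four times continuously differentiable on an open
interval containing `[0,1]`, then there is a constant `C > 0` such that for every `m ≥ 1`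
and every `y ∈ [0,1]`,
`|B_m f (y) - f y - y(1-y) f''(y) / (2m)| ≤ C / m²`. -/
theorem bernstein_second_order_approx (f : ℝ → ℝ) (U : Set ℝ) (hU : IsOpen U)
    (hUI : Set.Icc (0 : ℝ) 1 ⊆ U) (hf : ContDiffOn ℝ 4 f U) :
    ∃ C : ℝ, 0 < C ∧ ∀ m : ℕ, 1 ≤ m → ∀ y ∈ Set.Icc (0 : ℝ) 1,
      |bernsteinApprox f m y - f y - y * (1 - y) * deriv (deriv f) y / (2 * m)|
        ≤ C / m ^ 2 := by
  have hcont : ∀ i : ℕ, i ≤ 4 → ContinuousOn (iteratedDeriv i f) (Icc (0:ℝ) 1) := by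
    intro i hi
    have h1 : ContinuousOn (iteratedDerivWithin i f U) U :=
      hf.continuousOn_iteratedDerivWithin (by exact_mod_cast hi) hU.uniqueDiffOn
    have h2 : ContinuousOn (iteratedDeriv i f) U :=
      h1.congr fun x hx =>
        (iteratedDerivWithin_eq_global (n := 4) hU (by exact_mod_cast hf) hU.uniqueDiffOn
          (subset_refl U) hx hi).symm
    exact h2.mono hUI
  obtain ⟨M3, hM3⟩ := isCompact_Icc.exists_bound_of_continuousOn (hcont 3 (by norm_num))
  obtain ⟨M4, hM4⟩ := isCompact_Icc.exists_bound_of_continuousOn (hcont 4 (by norm_num))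
  have hM40 : 0 ≤ M4 := (norm_nonneg _).trans (hM4 0 (by norm_num))
  have hM30 : 0 ≤ M3 := (norm_nonneg _).trans (hM3 0 (by norm_num))
  refine ⟨M4 / 6 + M3 / 6 + 1, by positivity, fun m hm y hy => ?_⟩
  have hest := bern_main_est hU hUI hf (fun t ht => hM3 t ht) (fun t ht => hM4 t ht)
    hM40 m hm y hy
  refine hest.trans ?_
  have hmp : (0:ℝ) < (m:ℝ) ^ 2 := by
    have : (1:ℝ) ≤ (m:ℝ) := by exact_mod_cast hm
    positivity
  have h9 : (0:ℝ) ≤ 1 / (m:ℝ) ^ 2 := by positivity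
  calc (M4 / 6 + M3 / 6) / (m:ℝ) ^ 2 = (M4 / 6 + M3 / 6) * (1 / (m:ℝ) ^ 2) := by ring
    _ ≤ (M4 / 6 + M3 / 6 + 1) * (1 / (m:ℝ) ^ 2) := by
        exact mul_le_mul_of_nonneg_right (by linarith) h9
    _ = (M4 / 6 + M3 / 6 + 1) / (m:ℝ) ^ 2 := by ring

end Main
end

section
/- Let m \geq 1 be an integer, \varepsilon \in (0,1/2], M \geq 0 and let c_0, \dots, c_m be complex numbers with |c_k| \leq M for all k. Then for every complex number w = u + iv with u \in [\varepsilon, 1-\varepsilon] and v \in \mathbb{R}, \big| \sum_{k=0}^m \binom{m}{k} w^k (1-w)^{m-k} c_k \big| \leq M (1 + v^2/\varepsilon)^m. In particular, if |v| \leq L/\sqrt{m} for some L > 0, then this sum is bounded in modulus by M \exp(L^2/\varepsilon). -/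
open Finset Complex

/-- Bound on complex Bernstein-type sums: if `|c_k| ≤ M` for all `k`,
`ε ∈ (0, 1/2]`, and `w = u + iv` with `u ∈ [ε, 1-ε]`, then
`|∑_{k=0}^m (m choose k) w^k (1-w)^{m-k} c_k| ≤ M (1 + v²/ε)^m`; in particular, if
`|v| ≤ L/√m` for some `L > 0`, the sum is bounded in modulus by `M exp(L²/ε)`. -/
theorem bernstein_complex_bound (m : ℕ) (hm : 1 ≤ m) (ε M : ℝ)
    (hε : ε ∈ Set.Ioc (0 : ℝ) (1/2)) (hM : 0 ≤ M) (c : ℕ → ℂ)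
    (hc : ∀ k ≤ m, ‖c k‖ ≤ M) (u v : ℝ) (hu : u ∈ Set.Icc ε (1 - ε)) :
    ‖∑ k ∈ Finset.range (m + 1),
        (m.choose k : ℂ) * (u + v * Complex.I) ^ k * (1 - (u + v * Complex.I)) ^ (m - k) * c k‖
      ≤ M * (1 + v ^ 2 / ε) ^ m ∧
    ∀ L : ℝ, 0 < L → |v| ≤ L / Real.sqrt m →
      ‖∑ k ∈ Finset.range (m + 1),
          (m.choose k : ℂ) * (u + v * Complex.I) ^ k * (1 - (u + v * Complex.I)) ^ (m - k) * c k‖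
        ≤ M * Real.exp (L ^ 2 / ε) := by
  obtain ⟨hε0, hε2⟩ := hε
  obtain ⟨hu1, hu2⟩ := hu
  set w : ℂ := (u : ℂ) + (v : ℂ) * Complex.I with hw
  have ht0 : 0 ≤ v ^ 2 / (2 * ε) := div_nonneg (sq_nonneg v) (by linarith)
  have htε : 2 * ε * (v ^ 2 / (2 * ε)) = v ^ 2 := by
    field_simp
  -- |w| ≤ u + v²/(2ε)
  have habs1 : ‖w‖ ≤ u + v ^ 2 / (2 * ε) := by
    have h1 : ‖w‖ = Real.sqrt (u ^ 2 + v ^ 2) := by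
      rw [Complex.norm_def, Complex.normSq_apply]
      simp [hw]
      ring_nf
    rw [h1]
    have h2 : u ^ 2 + v ^ 2 ≤ (u + v ^ 2 / (2 * ε)) ^ 2 := by
      nlinarith [mul_nonneg (sub_nonneg.2 hu1) ht0, sq_nonneg (v ^ 2 / (2 * ε))]
    have := Real.sqrt_le_sqrt h2
    rwa [Real.sqrt_sq (by nlinarith)] at this
  -- |1 - w| ≤ (1-u) + v²/(2ε)
  have habs2 : ‖1 - w‖ ≤ (1 - u) + v ^ 2 / (2 * ε) := by
    have h1 : ‖1 - w‖ = Real.sqrt ((1 - u) ^ 2 + v ^ 2) := by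
      rw [Complex.norm_def, Complex.normSq_apply]
      simp [hw]
      ring_nf
    rw [h1]
    have h2 : (1 - u) ^ 2 + v ^ 2 ≤ ((1 - u) + v ^ 2 / (2 * ε)) ^ 2 := by
      nlinarith [mul_nonneg (sub_nonneg.2 (show ε ≤ 1 - u by linarith)) ht0,
        sq_nonneg (v ^ 2 / (2 * ε))]
    have := Real.sqrt_le_sqrt h2
    rwa [Real.sqrt_sq (by nlinarith)] at this
  have hsum : ‖w‖ + ‖1 - w‖ ≤ 1 + v ^ 2 / ε := by
    have : v ^ 2 / (2 * ε) + v ^ 2 / (2 * ε) = v ^ 2 / ε := by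
      field_simp; ring
    linarith
  have hbase : 0 ≤ 1 + v ^ 2 / ε := by positivity
  have hmain : ‖∑ k ∈ Finset.range (m + 1),
      (m.choose k : ℂ) * w ^ k * (1 - w) ^ (m - k) * c k‖
      ≤ M * (1 + v ^ 2 / ε) ^ m := by
    calc ‖∑ k ∈ Finset.range (m + 1),
          (m.choose k : ℂ) * w ^ k * (1 - w) ^ (m - k) * c k‖
        ≤ ∑ k ∈ Finset.range (m + 1),
          ‖(m.choose k : ℂ) * w ^ k * (1 - w) ^ (m - k) * c k‖ :=
          norm_sum_le _ _
      _ ≤ ∑ k ∈ Finset.range (m + 1),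
          (m.choose k : ℝ) * (‖w‖) ^ k * (‖1 - w‖) ^ (m - k) * M := by
          apply Finset.sum_le_sum
          intro k hk
          rw [norm_mul, norm_mul, norm_mul, norm_pow, norm_pow]
          have hck := hc k (by simpa using Nat.lt_succ_iff.mp (Finset.mem_range.mp hk))
          have : ‖((m.choose k : ℂ))‖ = (m.choose k : ℝ) := by
            simp
          rw [this]
          gcongr
      _ = M * (‖w‖ + ‖1 - w‖) ^ m := by
          rw [add_pow, Finset.mul_sum]
          apply Finset.sum_congr rfl
          intro k _
          ring
      _ ≤ M * (1 + v ^ 2 / ε) ^ m := by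
          gcongr
  refine ⟨hmain, fun L hL hvL => ?_⟩
  have hm0 : (0 : ℝ) < m := by exact_mod_cast hm
  have hv2 : v ^ 2 ≤ L ^ 2 / m := by
    have h1 : |v| ^ 2 ≤ (L / Real.sqrt m) ^ 2 := by
      apply pow_le_pow_left₀ (abs_nonneg v) hvL
    rw [_root_.sq_abs, div_pow, Real.sq_sqrt (le_of_lt hm0)] at h1
    exact h1
  have hexp : (1 + v ^ 2 / ε) ^ m ≤ Real.exp (L ^ 2 / ε) := by
    calc (1 + v ^ 2 / ε) ^ m ≤ Real.exp (v ^ 2 / ε) ^ m := by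
          apply pow_le_pow_left₀ hbase
          linarith [Real.add_one_le_exp (v ^ 2 / ε)]
      _ = Real.exp (m * (v ^ 2 / ε)) := by rw [← Real.exp_nat_mul]
      _ ≤ Real.exp (L ^ 2 / ε) := by
          apply Real.exp_le_exp.2
          have h2 : v ^ 2 * (m : ℝ) ≤ L ^ 2 := (le_div_iff₀ hm0).mp hv2
          rw [show (m : ℝ) * (v ^ 2 / ε) = (v ^ 2 * m) / ε by ring]
          gcongr
  calc ‖∑ k ∈ Finset.range (m + 1),
        (m.choose k : ℂ) * w ^ k * (1 - w) ^ (m - k) * c k‖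
      ≤ M * (1 + v ^ 2 / ε) ^ m := hmain
    _ ≤ M * Real.exp (L ^ 2 / ε) := by gcongr
end

section
/- Let A be a p \times p Hermitian positive semidefinite complex matrix, r \in \mathbb{C}^p, and z \in \mathbb{C} with v = \mathrm{Im}\, z > 0. Then \big| \big( 1 + r^*(A - zI)^{-1} r \big)^{-1} \big| \leq |z| / v. -/
open Matrix
open scoped ComplexOrder

/-- For a positive semidefinite matrix `A`, a vector `r` and `z` with
`v = Im z > 0`, one has `|(1 + r*(A - zI)⁻¹ r)⁻¹| ≤ |z| / v`. -/
theorem abs_inv_one_add_quadForm_resolvent_le {p : ℕ} (A : Matrix (Fin p) (Fin p) ℂ)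
    (hA : A.PosSemidef) (r : Fin p → ℂ) (z : ℂ) (hz : 0 < z.im) :
    ‖(1 + star r ⬝ᵥ ((A - z • (1 : Matrix (Fin p) (Fin p) ℂ))⁻¹ *ᵥ r))⁻¹‖
      ≤ ‖z‖ / z.im := by
  set B := A - z • (1 : Matrix (Fin p) (Fin p) ℂ) with hB
  -- B is invertible
  have hdet : IsUnit B.det := by
    rw [isUnit_iff_ne_zero]
    intro h
    obtain ⟨x, hx0, hx⟩ := (Matrix.exists_mulVec_eq_zero_iff).mpr h
    have h1 : star x ⬝ᵥ (B *ᵥ x) = 0 := by rw [hx, dotProduct_zero]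
    have h2 : star x ⬝ᵥ (A *ᵥ x) - z * (star x ⬝ᵥ x) = 0 := by
      simpa [hB, Matrix.sub_mulVec, Matrix.smul_mulVec, Matrix.one_mulVec,
        dotProduct_sub, dotProduct_smul, smul_eq_mul] using h1
    have ha := hA.dotProduct_mulVec_nonneg x
    have hn := dotProduct_star_self_nonneg x
    have hnz : star x ⬝ᵥ x ≠ 0 := fun hc => hx0 (dotProduct_star_self_eq_zero.mp hc)
    rw [Complex.nonneg_iff] at ha hn
    have haim : (star x ⬝ᵥ (A *ᵥ x)).im = 0 := ha.2.symm
    have hnim : (star x ⬝ᵥ x).im = 0 := hn.2.symm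
    have hnre : 0 < (star x ⬝ᵥ x).re := by
      rcases lt_or_eq_of_le hn.1 with h' | h'
      · exact h'
      · exact absurd (Complex.ext h'.symm hnim) hnz
    have him := congrArg Complex.im h2
    simp [Complex.mul_im, haim, hnim] at him
    rcases him with h' | h' <;> linarith
  set w := B⁻¹ *ᵥ r with hw
  have hr : B *ᵥ w = r := by
    rw [hw, Matrix.mulVec_mulVec, Matrix.mul_nonsing_inv _ hdet, Matrix.one_mulVec]
  set a := star w ⬝ᵥ (A *ᵥ w) with hadef
  set n := star w ⬝ᵥ w with hndef
  have ha := hA.dotProduct_mulVec_nonneg w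
  have hn := dotProduct_star_self_nonneg w
  rw [Complex.nonneg_iff] at ha hn
  have haim : a.im = 0 := ha.2.symm
  have hnim : n.im = 0 := hn.2.symm
  set s := star r ⬝ᵥ w with hsdef
  have hs : (starRingEnd ℂ) s = a - z * n := by
    have h1 : s = star (star w ⬝ᵥ r) := Matrix.star_dotProduct r w
    have h2 : (starRingEnd ℂ) s = star w ⬝ᵥ r := by
      rw [h1]; simp
    rw [h2, ← hr]
    simp [hB, Matrix.sub_mulVec, Matrix.smul_mulVec, Matrix.one_mulVec,
      dotProduct_sub, dotProduct_smul, smul_eq_mul, hadef, hndef]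
  have hsre : s.re = a.re - z.re * n.re := by
    have := congrArg Complex.re hs
    simp [Complex.sub_re, Complex.mul_re, hnim] at this
    linarith
  have hsim : s.im = z.im * n.re := by
    have := congrArg Complex.im hs
    simp [Complex.sub_im, Complex.mul_im, haim, hnim] at this
    linarith
  -- imaginary part of z * (1 + s)
  have him : (z * (1 + s)).im = z.im * (1 + a.re) := by
    simp [Complex.mul_im, Complex.add_im, Complex.add_re, hsre, hsim]
    ring
  have hims : z.im ≤ (z * (1 + s)).im := by
    rw [him]
    nlinarith [ha.1, hz]
  have hne : (1 : ℂ) + s ≠ 0 := by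
    intro h
    rw [h, mul_zero] at him
    simp at him
    rcases him with h' | h'
    · linarith
    · linarith [ha.1]
  have hpos : 0 < ‖1 + s‖ := norm_pos_iff.mpr hne
  have habs : z.im ≤ ‖z‖ * ‖1 + s‖ := by
    calc z.im ≤ (z * (1 + s)).im := hims
    _ ≤ |(z * (1 + s)).im| := le_abs_self _
    _ ≤ ‖z * (1 + s)‖ := Complex.abs_im_le_norm _
    _ = ‖z‖ * ‖1 + s‖ := norm_mul _ _
  rw [norm_inv, inv_eq_one_div, div_le_div_iff₀ hpos hz]
  linarith [habs]
end

section
/- Let B be a p \times p Hermitian complex matrix, r \in \mathbb{C}^p, and z \in \mathbb{C} with \mathrm{Im}\, z \neq 0. Then \mathrm{tr}\Big( (B + r r^* - zI)^{-1} - (B - zI)^{-1} \Big) = - \big( 1 + r^*(B - zI)^{-1} r \big)^{-1} \, r^* (B - zI)^{-2} r. -/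
open Matrix

variable {p : ℕ}

lemma aux_isUnit_det_sub_smul_one (B : Matrix (Fin p) (Fin p) ℂ)
    (hB : B.IsHermitian) (z : ℂ) (hz : z.im ≠ 0) :
    IsUnit (B - z • (1 : Matrix (Fin p) (Fin p) ℂ)).det := by
  rw [← isUnit_iff_isUnit_det, ← mulVec_injective_iff_isUnit]
  have key : ∀ x : Fin p → ℂ, (B - z • 1) *ᵥ x = 0 → x = 0 := by
    intro x hx
    have hBx : B *ᵥ x = z • x := by
      have h := hx
      rwa [sub_mulVec, smul_mulVec, one_mulVec, sub_eq_zero] at h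
    set c : ℂ := star x ⬝ᵥ x with hc
    have hself : star x ⬝ᵥ (B *ᵥ x) = star (star x ⬝ᵥ (B *ᵥ x)) := by
      conv_rhs => rw [star_dotProduct, star_star, star_mulVec, hB.eq,
        ← dotProduct_mulVec]
    have h1 : star x ⬝ᵥ (B *ᵥ x) = z * c := by
      rw [hBx, dotProduct_smul]; simp [hc, smul_eq_mul]
    have hcstar : star c = c := (star_dotProduct x x).symm
    have h2 : z * c = star z * c := by
      calc z * c = star (z * c) := by rw [← h1, ← hself, h1]
        _ = star z * c := by rw [star_mul', hcstar]
    have hc0 : c = 0 := by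
      by_contra hc0
      have hzz : z = star z := mul_right_cancel₀ hc0 h2
      apply hz
      have him := congrArg Complex.im hzz
      rw [Complex.star_def, Complex.conj_im] at him
      linarith
    have hsum : (↑(∑ i, Complex.normSq (x i)) : ℂ) = 0 := by
      rw [← hc0, hc]
      simp [dotProduct, Complex.normSq_eq_conj_mul_self]
    have hsum' : ∑ i, Complex.normSq (x i) = 0 := by exact_mod_cast hsum
    funext i
    have := (Finset.sum_eq_zero_iff_of_nonneg (fun i _ => Complex.normSq_nonneg (x i))).mp
      hsum' i (Finset.mem_univ i)
    simpa using Complex.normSq_eq_zero.mp this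
  intro x y hxy
  have : (B - z • 1) *ᵥ (x - y) = 0 := by
    rw [mulVec_sub, hxy, sub_self]
  exact sub_eq_zero.mp (key _ this)

lemma aux_vecMulVec_mul (u v : Fin p → ℂ) (A : Matrix (Fin p) (Fin p) ℂ) :
    vecMulVec u v * A = vecMulVec u (v ᵥ* A) := by
  ext i j
  simp [vecMulVec_apply, mul_apply, vecMul, dotProduct, Finset.mul_sum, mul_assoc]

lemma aux_mul_vecMulVec (u v : Fin p → ℂ) (A : Matrix (Fin p) (Fin p) ℂ) :
    A * vecMulVec u v = vecMulVec (A *ᵥ u) v := by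
  ext i j
  simp [vecMulVec_apply, mul_apply, mulVec, dotProduct, Finset.sum_mul, mul_assoc]

lemma aux_vecMulVec_mul_vecMulVec (a b c d : Fin p → ℂ) :
    vecMulVec a b * vecMulVec c d = (b ⬝ᵥ c) • vecMulVec a d := by
  ext i j
  simp only [mul_apply, vecMulVec_apply, Matrix.smul_apply, smul_eq_mul, dotProduct,
    Finset.sum_mul]
  exact Finset.sum_congr rfl fun k _ => by ring

lemma aux_trace_vecMulVec (u v : Fin p → ℂ) :
    trace (vecMulVec u v) = v ⬝ᵥ u := by
  simp [trace, vecMulVec_apply, dotProduct, diag, mul_comm]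


/-- Trace of the rank-one resolvent perturbation: for Hermitian `B`,
vector `r` and `z` with nonzero imaginary part,
`tr((B + rr* - zI)⁻¹ - (B - zI)⁻¹) = -(1 + r*(B-zI)⁻¹r)⁻¹ · r*(B-zI)⁻²r`. -/
theorem trace_resolvent_rank_one_perturbation {p : ℕ} (B : Matrix (Fin p) (Fin p) ℂ)
    (hB : B.IsHermitian) (r : Fin p → ℂ) (z : ℂ) (hz : z.im ≠ 0) :
    Matrix.trace
        ((B + vecMulVec r (star r) - z • (1 : Matrix (Fin p) (Fin p) ℂ))⁻¹
          - (B - z • (1 : Matrix (Fin p) (Fin p) ℂ))⁻¹)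
      = -(1 + star r ⬝ᵥ ((B - z • (1 : Matrix (Fin p) (Fin p) ℂ))⁻¹ *ᵥ r))⁻¹ *
          (star r ⬝ᵥ (((B - z • (1 : Matrix (Fin p) (Fin p) ℂ))⁻¹ ^ 2) *ᵥ r)) := by
  set M : Matrix (Fin p) (Fin p) ℂ := B - z • 1 with hM
  set C : Matrix (Fin p) (Fin p) ℂ := vecMulVec r (star r) with hC
  have hMunit : IsUnit M.det := aux_isUnit_det_sub_smul_one B hB z hz
  have hCherm : C.IsHermitian := by
    ext i j
    simp [hC, vecMulVec_apply, conjTranspose_apply, mul_comm]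
  have hNunit : IsUnit (M + C).det := by
    have : M + C = (B + C) - z • 1 := by rw [hM]; abel
    rw [this]
    exact aux_isUnit_det_sub_smul_one (B + C) (hB.add hCherm) z hz
  set c : ℂ := star r ⬝ᵥ (M⁻¹ *ᵥ r) with hc
  set d : ℂ := 1 + c with hd
  -- d ≠ 0 via the matrix determinant lemma
  have hdet : (M + C).det = M.det * d := by
    rw [hC, vecMulVec_eq (Fin 1), det_add_mul _ _ hMunit]
    congr 1
    erw [det_fin_one, hd, hc]
    simp only [Matrix.add_apply, one_apply_eq, mul_apply, replicateCol_apply, replicateRow_apply, dotProduct, mulVec,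
      Finset.sum_mul, Finset.mul_sum]
    congr 1
    rw [Finset.sum_comm]
    exact Finset.sum_congr rfl fun k _ => Finset.sum_congr rfl fun l _ => by ring
  have hdne : d ≠ 0 := by
    intro h0
    rw [h0, mul_zero] at hdet
    exact hNunit.ne_zero hdet
  -- Sherman–Morrison
  have hCMC : C * M⁻¹ * C = c • C := by
    rw [hC, aux_vecMulVec_mul, aux_vecMulVec_mul_vecMulVec, ← dotProduct_mulVec, ← hc]
  have hSM : (M + C)⁻¹ = M⁻¹ - d⁻¹ • (M⁻¹ * C * M⁻¹) := by
    apply inv_eq_right_inv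
    have h1 : M * M⁻¹ = 1 := mul_nonsing_inv _ hMunit
    rw [add_mul, mul_sub, mul_sub, mul_smul_comm, mul_smul_comm,
      ← Matrix.mul_assoc, ← Matrix.mul_assoc, h1, Matrix.one_mul]
    have h2 : C * (M⁻¹ * C * M⁻¹) = c • (C * M⁻¹) := by
      rw [← Matrix.mul_assoc, ← Matrix.mul_assoc, hCMC, Matrix.smul_mul]
    rw [h2, smul_smul]
    have hcoef : d⁻¹ + d⁻¹ * c = 1 := by
      field_simp [hd]
      exact hd.symm
    calc 1 - d⁻¹ • (C * M⁻¹) + (C * M⁻¹ - (d⁻¹ * c) • (C * M⁻¹))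
        = 1 + (1 - (d⁻¹ + d⁻¹ * c)) • (C * M⁻¹) := by
          rw [sub_smul, add_smul, one_smul]; abel
      _ = 1 := by rw [hcoef, sub_self, zero_smul, add_zero]
  have hMC : B + C - z • 1 = M + C := by rw [hM]; abel
  rw [hMC, hSM]
  have : M⁻¹ - d⁻¹ • (M⁻¹ * C * M⁻¹) - M⁻¹ = -(d⁻¹ • (M⁻¹ * C * M⁻¹)) := by abel
  rw [this, trace_neg, trace_smul]
  have htr : trace (M⁻¹ * C * M⁻¹) = star r ⬝ᵥ ((M⁻¹ ^ 2) *ᵥ r) := by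
    rw [hC, aux_mul_vecMulVec, aux_vecMulVec_mul, aux_trace_vecMulVec,
      ← dotProduct_mulVec, mulVec_mulVec, ← sq]
  rw [htr, smul_eq_mul, hd, hc, neg_mul]
end

section
/- Let B be a p \times p Hermitian complex matrix, r \in \mathbb{C}^p, z \in \mathbb{C} with v = \mathrm{Im}\, z > 0, and let M be any p \times p complex matrix. Then \Big| \mathrm{tr}\Big( \big( (B + r r^* - zI)^{-1} - (B - zI)^{-1} \big) M \Big) \Big| \leq \|M\| / v. -/
open Matrix

noncomputable def ι {p : ℕ} : (Fin p → ℂ) → EuclideanSpace ℂ (Fin p) := (WithLp.equiv 2 _).symm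

lemma herm_dot_im {p : ℕ} (A : Matrix (Fin p) (Fin p) ℂ) (hA : A.IsHermitian) (x : Fin p → ℂ) :
    (star x ⬝ᵥ (A *ᵥ x)).im = 0 := by
  have h : star (star x ⬝ᵥ (A *ᵥ x)) = star x ⬝ᵥ (A *ᵥ x) := by
    conv_lhs => rw [Matrix.star_dotProduct, star_star]
    rw [Matrix.star_mulVec, hA.eq, ← Matrix.dotProduct_mulVec]
  have := congrArg Complex.im h
  simp [Complex.star_def] at this
  linarith

lemma dot_self_eq {p : ℕ} (x : Fin p → ℂ) : star x ⬝ᵥ x = ((‖ι x‖^2 : ℝ) : ℂ) := by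
  rw [dotProduct_comm, ← EuclideanSpace.inner_toLp_toLp, Complex.ofReal_pow]
  exact inner_self_eq_norm_sq_to_K (𝕜 := ℂ) (ι x)

lemma iota_norm_ne {p : ℕ} {x : Fin p → ℂ} (hx : x ≠ 0) : ‖ι x‖ ≠ 0 := by
  simp only [norm_ne_zero_iff]
  intro h; apply hx
  exact congrArg (WithLp.equiv 2 _) h

lemma herm_det_unit {p : ℕ} (A : Matrix (Fin p) (Fin p) ℂ) (hA : A.IsHermitian) (z : ℂ)
    (hz : z.im ≠ 0) : IsUnit (A - z • (1 : Matrix (Fin p) (Fin p) ℂ)).det := by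
  rw [isUnit_iff_ne_zero]
  intro hdet
  obtain ⟨v, hv, hAv⟩ := (Matrix.exists_mulVec_eq_zero_iff).2 hdet
  rw [Matrix.sub_mulVec, Matrix.smul_mulVec, Matrix.one_mulVec, sub_eq_zero] at hAv
  have h1 : (star v ⬝ᵥ (A *ᵥ v)).im = 0 := herm_dot_im A hA v
  rw [hAv, dotProduct_smul, dot_self_eq] at h1
  simp only [smul_eq_mul, Complex.mul_im, Complex.ofReal_im, Complex.ofReal_re, mul_zero,
    zero_add] at h1
  rcases mul_eq_zero.mp h1 with h | h
  · exact hz h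
  · exact iota_norm_ne hv ((pow_eq_zero_iff two_ne_zero).mp h)

lemma im_dot_resolvent {p : ℕ} (A : Matrix (Fin p) (Fin p) ℂ) (hA : A.IsHermitian) (z : ℂ)
    (u : Fin p → ℂ) :
    (star ((A - z • (1 : Matrix (Fin p) (Fin p) ℂ)) *ᵥ u) ⬝ᵥ u).im = z.im * ‖ι u‖^2 := by
  rw [Matrix.star_dotProduct]
  have h1 : (star u ⬝ᵥ (A *ᵥ u)).im = 0 := herm_dot_im A hA u
  rw [Matrix.sub_mulVec, Matrix.smul_mulVec, Matrix.one_mulVec, dotProduct_sub,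
    dotProduct_smul, dot_self_eq]
  simp [Complex.star_def, Complex.sub_im, Complex.mul_im, h1, ← Complex.ofReal_pow]

lemma trace_vecMulVec_mul {p : ℕ} (a b : Fin p → ℂ) (N : Matrix (Fin p) (Fin p) ℂ) :
    Matrix.trace (vecMulVec a b * N) = b ⬝ᵥ (N *ᵥ a) := by
  simp only [Matrix.trace, Matrix.diag, Matrix.mul_apply, vecMulVec_apply, dotProduct,
    Matrix.mulVec, Finset.mul_sum]
  rw [Finset.sum_comm]
  congr 1; ext j; congr 1; ext i; ring

lemma vecMulVec_mulVec' {p : ℕ} (a b x : Fin p → ℂ) :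
    (vecMulVec a b) *ᵥ x = (b ⬝ᵥ x) • a := by
  ext i
  simp only [Matrix.mulVec, vecMulVec_apply, dotProduct, Pi.smul_apply, smul_eq_mul,
    Finset.sum_mul, Finset.mul_sum]
  congr 1; ext j; ring

lemma vecMulVec_star_isHermitian {p : ℕ} (r : Fin p → ℂ) :
    (vecMulVec r (star r)).IsHermitian := by
  ext i j
  simp [Matrix.conjTranspose_apply, vecMulVec_apply, mul_comm]

lemma sub_smul_one_mul_comm {p : ℕ} (B : Matrix (Fin p) (Fin p) ℂ) (a b : ℂ) :
    (B - a • 1) * (B - b • 1) = (B - b • 1) * (B - a • 1) := by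
  simp only [Matrix.mul_sub, Matrix.sub_mul, Matrix.mul_smul, Matrix.smul_mul, Matrix.mul_one,
    Matrix.one_mul, smul_smul, smul_sub]
  rw [mul_comm a b]
  abel

/-- For Hermitian `B`, vector `r`, `z` with `v = Im z > 0`, and any matrix
`M`, `|tr(((B + rr* - zI)⁻¹ - (B - zI)⁻¹) M)| ≤ ‖M‖ / v`, where `‖M‖` is the operator
norm of `M` acting on the Euclidean space `ℂᵖ`. -/
theorem abs_trace_resolvent_diff_mul_le {p : ℕ} (B : Matrix (Fin p) (Fin p) ℂ)
    (hB : B.IsHermitian) (r : Fin p → ℂ) (z : ℂ) (hz : 0 < z.im)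
    (M : Matrix (Fin p) (Fin p) ℂ) :
    ‖(Matrix.trace
          (((B + vecMulVec r (star r) - z • (1 : Matrix (Fin p) (Fin p) ℂ))⁻¹
              - (B - z • (1 : Matrix (Fin p) (Fin p) ℂ))⁻¹) * M))‖
      ≤ ‖Matrix.toEuclideanCLM (𝕜 := ℂ) M‖ / z.im := by
  set C := ‖Matrix.toEuclideanCLM (𝕜 := ℂ) M‖ with hC
  have hC0 : 0 ≤ C := norm_nonneg _
  by_cases hr : r = 0
  · subst hr
    have h0 : vecMulVec (0 : Fin p → ℂ) (star (0 : Fin p → ℂ)) = 0 := by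
      ext i j; simp [vecMulVec_apply]
    rw [h0, add_zero, sub_self, Matrix.zero_mul, Matrix.trace_zero, norm_zero]
    positivity
  · set V := vecMulVec r (star r) with hV
    set A0 := B - z • (1 : Matrix (Fin p) (Fin p) ℂ) with hA0def
    set A1 := B + V - z • (1 : Matrix (Fin p) (Fin p) ℂ) with hA1def
    have hzne : z.im ≠ 0 := ne_of_gt hz
    have hA0 : IsUnit A0.det := herm_det_unit B hB z hzne
    have hVH : V.IsHermitian := vecMulVec_star_isHermitian r
    have hA1 : IsUnit A1.det := herm_det_unit (B + V) (hB.add hVH) z hzne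
    set u : Fin p → ℂ := A0⁻¹ *ᵥ r with hu
    have hA0u : A0 *ᵥ u = r := by
      rw [hu, Matrix.mulVec_mulVec, Matrix.mul_nonsing_inv _ hA0, Matrix.one_mulVec]
    have hune : u ≠ 0 := fun h => hr (by rw [← hA0u, h, Matrix.mulVec_zero])
    have hnu : (0:ℝ) < ‖ι u‖^2 := by
      have := iota_norm_ne hune
      positivity
    set s : ℂ := star r ⬝ᵥ u with hs
    have hsim : s.im = z.im * ‖ι u‖^2 := by
      rw [hs, ← hA0u]; exact im_dot_resolvent B hB z u
    have h1s_im : (1 + s).im = z.im * ‖ι u‖^2 := by simp [hsim]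
    have h1s_pos : (0:ℝ) < z.im * ‖ι u‖^2 := by positivity
    have h1sabs : z.im * ‖ι u‖^2 ≤ ‖1 + s‖ := by
      calc z.im * ‖ι u‖^2 = (1+s).im := h1s_im.symm
        _ ≤ |(1+s).im| := le_abs_self _
        _ ≤ ‖1 + s‖ := Complex.abs_im_le_norm _
    have h1sne : (1 + s) ≠ 0 := by
      intro h
      rw [h, norm_zero] at h1sabs
      linarith
    -- key vector identity
    have hVu : V *ᵥ u = s • r := by rw [hV, vecMulVec_mulVec', hs]
    have hA1u : A1 *ᵥ u = (1 + s) • r := by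
      have hsplit : A1 = A0 + V := by rw [hA1def, hA0def]; abel
      rw [hsplit, Matrix.add_mulVec, hA0u, hVu, add_smul, one_smul]
    have hA1inv_r : A1⁻¹ *ᵥ r = (1 + s)⁻¹ • u := by
      have h2 : A1⁻¹ *ᵥ (A1 *ᵥ u) = u := by
        rw [Matrix.mulVec_mulVec, Matrix.nonsing_inv_mul _ hA1, Matrix.one_mulVec]
      rw [hA1u, Matrix.mulVec_smul] at h2
      rw [← h2, smul_smul, inv_mul_cancel₀ h1sne, one_smul]
    -- difference identity
    have hdiff : A1⁻¹ - A0⁻¹ = -(A1⁻¹ * V * A0⁻¹) := by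
      have h3 : A1⁻¹ * (A0 - A1) * A0⁻¹ = A1⁻¹ - A0⁻¹ := by
        rw [Matrix.mul_sub, Matrix.sub_mul, Matrix.mul_assoc,
          Matrix.mul_nonsing_inv _ hA0, Matrix.mul_one, Matrix.nonsing_inv_mul _ hA1,
          Matrix.one_mul]
      have h4 : A0 - A1 = -V := by rw [hA0def, hA1def]; abel
      rw [← h3, h4, Matrix.mul_neg, Matrix.neg_mul]
    -- trace computation
    set w : Fin p → ℂ := M *ᵥ u with hw
    have htr : Matrix.trace ((A1⁻¹ - A0⁻¹) * M)
        = -((1 + s)⁻¹ * (star r ⬝ᵥ (A0⁻¹ *ᵥ w))) := by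
      rw [hdiff, Matrix.neg_mul, Matrix.trace_neg, neg_inj]
      have e1 : A1⁻¹ * V * A0⁻¹ * M = A1⁻¹ * (V * (A0⁻¹ * M)) := by
        simp [Matrix.mul_assoc]
      rw [e1, Matrix.trace_mul_comm, Matrix.mul_assoc, hV, trace_vecMulVec_mul,
        ← Matrix.mulVec_mulVec, hA1inv_r, Matrix.mulVec_smul, dotProduct_smul,
        smul_eq_mul, ← Matrix.mulVec_mulVec, ← hw]
    -- u' and inner product bound
    set u' : Fin p → ℂ := (A0ᴴ)⁻¹ *ᵥ r with hu'
    have hstaru' : star u' = star r ᵥ* A0⁻¹ := by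
      rw [hu', Matrix.star_mulVec, Matrix.conjTranspose_nonsing_inv, Matrix.conjTranspose_conjTranspose]
    have hdot_eq : star r ⬝ᵥ (A0⁻¹ *ᵥ w) = star u' ⬝ᵥ w := by
      rw [hstaru', Matrix.dotProduct_mulVec]
    -- norm equality ‖ι u'‖ = ‖ι u‖
    have hA0H : A0ᴴ = B - (starRingEnd ℂ z) • 1 := by
      rw [hA0def, Matrix.conjTranspose_sub, Matrix.conjTranspose_smul,
        Matrix.conjTranspose_one, hB.eq]
      rfl
    have hcomm : A0 * A0ᴴ = A0ᴴ * A0 := by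
      rw [hA0H, hA0def]; exact sub_smul_one_mul_comm B z _
    have hinvcomm : A0⁻¹ * (A0ᴴ)⁻¹ = (A0ᴴ)⁻¹ * A0⁻¹ := by
      rw [← Matrix.mul_inv_rev, ← Matrix.mul_inv_rev, hcomm]
    have hnormeq : ‖ι u'‖ = ‖ι u‖ := by
      have e2 : star u' ⬝ᵥ u' = star u ⬝ᵥ u := by
        have l1 : star u' ⬝ᵥ u' = star r ⬝ᵥ ((A0⁻¹ * (A0ᴴ)⁻¹) *ᵥ r) := by
          rw [hstaru', ← Matrix.dotProduct_mulVec, hu', Matrix.mulVec_mulVec]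
        have l2 : star u ⬝ᵥ u = star r ⬝ᵥ (((A0ᴴ)⁻¹ * A0⁻¹) *ᵥ r) := by
          have hsu : star u = star r ᵥ* (A0ᴴ)⁻¹ := by
            rw [hu, Matrix.star_mulVec, Matrix.conjTranspose_nonsing_inv]
          rw [hsu, ← Matrix.dotProduct_mulVec, hu, Matrix.mulVec_mulVec]
        rw [l1, l2, hinvcomm]
      rw [dot_self_eq, dot_self_eq] at e2
      exact (sq_eq_sq₀ (norm_nonneg _) (norm_nonneg _)).mp (Complex.ofReal_inj.mp e2)
    -- inner product bound
    have hιw : ι w = Matrix.toEuclideanCLM (𝕜 := ℂ) M (ι u) := by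
      rw [hw]
      exact (Matrix.toEuclideanCLM_toLp M u).symm
    have hinner : ‖star u' ⬝ᵥ w‖ ≤ C * ‖ι u‖^2 := by
      rw [dotProduct_comm, ← EuclideanSpace.inner_toLp_toLp]
      calc ‖inner (𝕜 := ℂ) (ι u') (ι w)‖
          = ‖inner (𝕜 := ℂ) (ι u') (ι w)‖ := rfl
        _ ≤ ‖ι u'‖ * ‖ι w‖ := norm_inner_le_norm _ _
        _ ≤ ‖ι u‖ * (C * ‖ι u‖) := by
            rw [hnormeq, hιw]
            exact mul_le_mul_of_nonneg_left
              ((Matrix.toEuclideanCLM (𝕜 := ℂ) M).le_opNorm (ι u)) (norm_nonneg _)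
        _ = C * ‖ι u‖^2 := by ring
    -- final computation
    rw [htr, hdot_eq, norm_neg, norm_mul, norm_inv]
    have habs1s : 0 < ‖1 + s‖ := norm_pos_iff.mpr h1sne
    calc (‖1 + s‖)⁻¹ * ‖star u' ⬝ᵥ w‖
        ≤ (z.im * ‖ι u‖^2)⁻¹ * (C * ‖ι u‖^2) := by
          apply mul_le_mul _ hinner (norm_nonneg _) (by positivity)
          exact inv_anti₀ h1s_pos h1sabs
      _ = C / z.im := by have hn := iota_norm_ne hune; field_simp
end
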